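/- Let M be a D×D unimodular matrix, let Γ₁, …, Γ_L be D×D nonsingular integer matrices that are pairwise commutative and pairwise coprime, set M_i = MΓ_i, and let R = MΓ₁Γ₂⋯Γ_L U for a unimodular matrix U (an lcrm of the M_i). For each i set W_i = MΓ₁⋯Γ_{i−1}Γ_{i+1}⋯Γ_L and let Ŵ_i be an integer matrix satisfying W_iŴ_i + M_iQ_i = I for some integer matrix Q_i. Then every integer vector m ∈ 𝒩(R) is recovered from its remainders r_i = ⟨m⟩_{M_i} by m = ⟨ Σ_{i=1}^{L} W_iŴ_i r_i ⟩_R. -/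

import Mathlib

open Matrix

/-- An integer matrix is unimodular if its determinant is `1` or `-1`. -/
def Unimod {D : ℕ} (U : Matrix (Fin D) (Fin D) ℤ) : Prop := U.det = 1 ∨ U.det = -1

/-- `C` is a common right multiple (crm) of the family `M`. -/
def IsCRM {D n : ℕ} (M : Fin n → Matrix (Fin D) (Fin D) ℤ)
    (C : Matrix (Fin D) (Fin D) ℤ) : Prop :=
  C.det ≠ 0 ∧ ∀ i, ∃ Q : Matrix (Fin D) (Fin D) ℤ, C = M i * Q

/-- `C` is a least common right multiple (lcrm) of the family `M`. -/
def IsLCRM {D n : ℕ} (M : Fin n → Matrix (Fin D) (Fin D) ℤ)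
    (C : Matrix (Fin D) (Fin D) ℤ) : Prop :=
  IsCRM M C ∧ ∀ C', IsCRM M C' → ∃ P : Matrix (Fin D) (Fin D) ℤ, C' = C * P

/-- `C` is a common left multiple (clm) of the family `M`. -/
def IsCLM {D n : ℕ} (M : Fin n → Matrix (Fin D) (Fin D) ℤ)
    (C : Matrix (Fin D) (Fin D) ℤ) : Prop :=
  C.det ≠ 0 ∧ ∀ i, ∃ Q : Matrix (Fin D) (Fin D) ℤ, C = Q * M i

/-- `C` is a least common left multiple (lclm) of the family `M`. -/
def IsLCLM {D n : ℕ} (M : Fin n → Matrix (Fin D) (Fin D) ℤ)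
    (C : Matrix (Fin D) (Fin D) ℤ) : Prop :=
  IsCLM M C ∧ ∀ C', IsCLM M C' → ∃ P : Matrix (Fin D) (Fin D) ℤ, C' = P * C

/-- `B` is a common left divisor (cld) of the family `M`. -/
def IsCLD {D n : ℕ} (M : Fin n → Matrix (Fin D) (Fin D) ℤ)
    (B : Matrix (Fin D) (Fin D) ℤ) : Prop :=
  B.det ≠ 0 ∧ ∀ i, ∃ K : Matrix (Fin D) (Fin D) ℤ, M i = B * K

/-- `B` is a greatest common left divisor (gcld) of the family `M`:
`B` is a cld, and every cld of the family is a left divisor of `B`. -/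
def IsGCLD {D n : ℕ} (M : Fin n → Matrix (Fin D) (Fin D) ℤ)
    (B : Matrix (Fin D) (Fin D) ℤ) : Prop :=
  IsCLD M B ∧ ∀ B', IsCLD M B' → ∃ K : Matrix (Fin D) (Fin D) ℤ, B = B' * K

/-- `A` and `B` are left coprime: every (nonsingular) common left divisor is unimodular. -/
def LeftCoprime {D : ℕ} (A B : Matrix (Fin D) (Fin D) ℤ) : Prop :=
  ∀ C : Matrix (Fin D) (Fin D) ℤ, C.det ≠ 0 →
    (∃ K, A = C * K) → (∃ K, B = C * K) → Unimod C

/-- `A` and `B` are right coprime: every (nonsingular) common right divisor is unimodular. -/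
def RightCoprime {D : ℕ} (A B : Matrix (Fin D) (Fin D) ℤ) : Prop :=
  ∀ C : Matrix (Fin D) (Fin D) ℤ, C.det ≠ 0 →
    (∃ K, A = K * C) → (∃ K, B = K * C) → Unimod C

/-- `A` and `B` are coprime (for commuting matrices left and right coprimeness coincide). -/
def MatCoprime {D : ℕ} (A B : Matrix (Fin D) (Fin D) ℤ) : Prop :=
  LeftCoprime A B ∧ RightCoprime A B

/-- The lattice generated by an integer matrix `M`: all integer combinations `M n`. -/
def LAT {D : ℕ} (M : Matrix (Fin D) (Fin D) ℤ) : Set (Fin D → ℤ) :=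
  {v | ∃ n : Fin D → ℤ, v = M.mulVec n}

/-- `𝒩(M)`: the integer vectors of the form `M x` with `x ∈ [0,1)^D`. -/
def NSet {D : ℕ} (M : Matrix (Fin D) (Fin D) ℤ) : Set (Fin D → ℤ) :=
  {k | ∃ x : Fin D → ℚ, (∀ j, 0 ≤ x j ∧ x j < 1) ∧
      (M.map (Int.cast : ℤ → ℚ)).mulVec x = fun j => (k j : ℚ)}

/-- `r` is the remainder of `m` modulo `M`: `r ∈ 𝒩(M)` and `m − r ∈ LAT(M)`. -/
def IsRem {D : ℕ} (M : Matrix (Fin D) (Fin D) ℤ) (m r : Fin D → ℤ) : Prop :=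
  r ∈ NSet M ∧ (m - r) ∈ LAT M

/-- The Euclidean norm on `ℝ^D`. -/
noncomputable def euclNorm {D : ℕ} (v : Fin D → ℝ) : ℝ := Real.sqrt (∑ j, (v j) ^ 2)

/-- The lattice generated by a real matrix `M`: all integer combinations `M n`. -/
def LATR {D : ℕ} (M : Matrix (Fin D) (Fin D) ℝ) : Set (Fin D → ℝ) :=
  {v | ∃ n : Fin D → ℤ, v = M.mulVec (fun j => (n j : ℝ))}

namespace Stmt9Aux

variable {D : ℕ}

/-- The lattice of a matrix as an `AddSubgroup`. -/
def lat (M : Matrix (Fin D) (Fin D) ℤ) : AddSubgroup (Fin D → ℤ) :=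
  (M.mulVecLin.toAddMonoidHom).range

lemma mem_lat {M : Matrix (Fin D) (Fin D) ℤ} {x : Fin D → ℤ} :
    x ∈ lat M ↔ ∃ y, M.mulVec y = x := by
  simp [lat, Matrix.mulVecLin_apply, AddMonoidHom.mem_range]

lemma mulVec_mem_lat (M : Matrix (Fin D) (Fin D) ℤ) (y : Fin D → ℤ) :
    M.mulVec y ∈ lat M := mem_lat.mpr ⟨y, rfl⟩

lemma mulVec_injective {M : Matrix (Fin D) (Fin D) ℤ} (hM : M.det ≠ 0) :
    Function.Injective M.mulVec := by
  intro a b hab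
  have h := congrArg (fun v => M.adjugate.mulVec v) hab
  simp only [Matrix.mulVec_mulVec, Matrix.adjugate_mul, Matrix.smul_mulVec,
    Matrix.one_mulVec] at h
  exact smul_right_injective (Fin D → ℤ) hM h

lemma lat_index_ne_zero {M : Matrix (Fin D) (Fin D) ℤ} (hM : M.det ≠ 0) :
    (lat M).index ≠ 0 := by
  rw [Int.addSubgroup_index_ne_zero_iff]
  have hinj : Function.Injective (M.mulVecLin.toAddMonoidHom) := by
    exact mulVec_injective hM
  exact ⟨(AddMonoidHom.ofInjective hinj).symm⟩

lemma lat_mul_le_left (A B : Matrix (Fin D) (Fin D) ℤ) : lat (A * B) ≤ lat A := by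
  intro x hx
  obtain ⟨v, hv⟩ := mem_lat.mp hx
  exact mem_lat.mpr ⟨B.mulVec v, by rw [Matrix.mulVec_mulVec, hv]⟩

lemma index_lat_mul {A : Matrix (Fin D) (Fin D) ℤ} (B : Matrix (Fin D) (Fin D) ℤ)
    (hA : A.det ≠ 0) :
    (lat (A * B)).index = (lat B).index * (lat A).index := by
  have hle : lat (A * B) ≤ lat A := lat_mul_le_left A B
  rw [← AddSubgroup.relIndex_mul_index hle]
  congr 1
  set J := lat (A * B)
  set H := lat A
  let ι : (Fin D → ℤ) →+ H :=
    (A.mulVecLin.toAddMonoidHom).codRestrict H (fun x => mulVec_mem_lat A x)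
  let ψ : (Fin D → ℤ) →+ H ⧸ (J.addSubgroupOf H) := (QuotientAddGroup.mk' _).comp ι
  have hsurj : Function.Surjective ψ := by
    intro q
    induction q using QuotientAddGroup.induction_on with
    | _ h =>
      obtain ⟨w, hw⟩ := mem_lat.mp h.2
      exact ⟨w, congrArg (QuotientAddGroup.mk) (Subtype.ext hw)⟩
  have hker : ψ.ker = lat B := by
    ext x
    have : ψ x = 0 ↔ (A.mulVec x) ∈ J := by
      rw [show ψ x = ((ι x : H) : H ⧸ (J.addSubgroupOf H)) from rfl,
        QuotientAddGroup.eq_zero_iff, AddSubgroup.mem_addSubgroupOf]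
      rfl
    rw [AddMonoidHom.mem_ker, this]
    constructor
    · intro hx
      obtain ⟨y, hy⟩ := mem_lat.mp hx
      rw [← Matrix.mulVec_mulVec] at hy
      exact mem_lat.mpr ⟨y, mulVec_injective hA hy⟩
    · intro hx
      obtain ⟨y, hy⟩ := mem_lat.mp hx
      exact mem_lat.mpr ⟨y, by rw [← Matrix.mulVec_mulVec, hy]⟩
  have hcard := Nat.card_congr (QuotientAddGroup.quotientKerEquivOfSurjective ψ hsurj).toEquiv
  rw [hker] at hcard
  exact hcard.symm

lemma lat_inf_le {A B X Y : Matrix (Fin D) (Fin D) ℤ} (hA : A.det ≠ 0) (hB : B.det ≠ 0)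
    (hc : A * B = B * A) (hbez : A * X + B * Y = 1) :
    lat A ⊓ lat B ≤ lat (A * B) := by
  have hsup : lat A ⊔ lat B = ⊤ := by
    rw [eq_top_iff]
    intro x _
    have hx : x = A.mulVec (X.mulVec x) + B.mulVec (Y.mulVec x) := by
      rw [Matrix.mulVec_mulVec, Matrix.mulVec_mulVec, ← Matrix.add_mulVec, hbez,
        Matrix.one_mulVec]
    rw [hx]
    exact AddSubgroup.add_mem _ (AddSubgroup.mem_sup_left (mulVec_mem_lat _ _))
      (AddSubgroup.mem_sup_right (mulVec_mem_lat _ _))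
  have hJle : lat (A * B) ≤ lat A ⊓ lat B :=
    le_inf (lat_mul_le_left A B) (by rw [hc]; exact lat_mul_le_left B A)
  have hidxJ : (lat (A * B)).index = (lat B).index * (lat A).index := index_lat_mul B hA
  have hidxInf : (lat A ⊓ lat B).index = (lat A).index * (lat B).index := by
    rw [← AddSubgroup.relIndex_mul_index (inf_le_right : lat A ⊓ lat B ≤ lat B),
      AddSubgroup.inf_relIndex_right]
    congr 1
    rw [← AddSubgroup.relIndex_sup_right (lat B) (lat A), sup_comm, hsup,
      AddSubgroup.relIndex_top_right]
  have hne : (lat A ⊓ lat B).index ≠ 0 := by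
    rw [hidxInf]
    exact Nat.mul_ne_zero (lat_index_ne_zero hA) (lat_index_ne_zero hB)
  have h1 := AddSubgroup.relIndex_mul_index hJle
  rw [hidxJ] at h1
  have h1' : (lat (A * B)).relIndex (lat A ⊓ lat B) * (lat A ⊓ lat B).index
      = 1 * (lat A ⊓ lat B).index := by
    rw [h1, one_mul, hidxInf, Nat.mul_comm]
  have h2 : (lat (A * B)).relIndex (lat A ⊓ lat B) = 1 :=
    Nat.eq_of_mul_eq_mul_right (Nat.pos_of_ne_zero hne) h1'
  exact AddSubgroup.relIndex_eq_one.mp h2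


lemma prod_factor {l : List (Matrix (Fin D) (Fin D) ℤ)} {x : Matrix (Fin D) (Fin D) ℤ}
    (hx : x ∈ l) (hc : ∀ y ∈ l, x * y = y * x) :
    ∃ C, l.prod = x * C := by
  induction l with
  | nil => cases hx
  | cons a t ih =>
    rcases List.mem_cons.mp hx with h | h
    · exact ⟨t.prod, by rw [List.prod_cons, h]⟩
    · obtain ⟨C, hC⟩ := ih h (fun y hy => hc y (List.mem_cons_of_mem a hy))
      refine ⟨a * C, ?_⟩
      rw [List.prod_cons, hC, ← mul_assoc, ← hc a List.mem_cons_self, mul_assoc]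

lemma det_prod_ne_zero {l : List (Matrix (Fin D) (Fin D) ℤ)}
    (h : ∀ x ∈ l, x.det ≠ 0) : l.prod.det ≠ 0 := by
  induction l with
  | nil => simp
  | cons a t ih =>
    rw [List.prod_cons, Matrix.det_mul]
    exact mul_ne_zero (h a List.mem_cons_self)
      (ih (fun x hx => h x (List.mem_cons_of_mem a hx)))

lemma mem_eraseIdx_ofFn {L : ℕ} (Γ : Fin L → Matrix (Fin D) (Fin D) ℤ) {i j : Fin L}
    (h : j ≠ i) : Γ j ∈ (List.ofFn Γ).eraseIdx i.val := by
  rw [List.eraseIdx_eq_take_drop_succ]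
  rcases lt_or_gt_of_ne (fun hv => h (Fin.ext hv)) with hlt | hgt
  · apply List.mem_append_left
    have hj : (j : ℕ) < ((List.ofFn Γ).take i.val).length := by
      simp only [List.length_take, List.length_ofFn]
      omega
    have he : ((List.ofFn Γ).take i.val)[(j : ℕ)] = Γ j := by
      rw [List.getElem_take]
      simp [List.getElem_ofFn]
    exact he ▸ List.getElem_mem hj
  · apply List.mem_append_right
    have hj : (j : ℕ) - (i.val + 1) < ((List.ofFn Γ).drop (i.val + 1)).length := by
      simp only [List.length_drop, List.length_ofFn]
      omega
    have he : ((List.ofFn Γ).drop (i.val + 1))[(j : ℕ) - (i.val + 1)] = Γ j := by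
      rw [List.getElem_drop, List.getElem_ofFn]
      exact congrArg Γ (by apply Fin.ext; simp; omega)
    exact he ▸ List.getElem_mem hj

lemma key_induction {L : ℕ} (Γ : Fin L → Matrix (Fin D) (Fin D) ℤ)
    (hΓ : ∀ i, (Γ i).det ≠ 0)
    (hcomm : ∀ i j, Γ i * Γ j = Γ j * Γ i)
    (hbez : ∀ i : Fin L, ∃ A B : Matrix (Fin D) (Fin D) ℤ,
      ((List.ofFn Γ).eraseIdx i.val).prod * A + Γ i * B = 1)
    (y : Fin D → ℤ) (hy : ∀ i, y ∈ lat (Γ i)) :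
    y ∈ lat ((List.ofFn Γ).prod) := by
  have hlen : (List.ofFn Γ).length = L := List.length_ofFn
  have hmem : ∀ x ∈ List.ofFn Γ, x.det ≠ 0 := by
    intro x hx
    obtain ⟨k, rfl⟩ := List.mem_ofFn.mp hx
    exact hΓ k
  have main : ∀ k, k ≤ L → y ∈ lat (((List.ofFn Γ).take k).prod) := by
    intro k
    induction k with
    | zero =>
      intro _
      exact mem_lat.mpr ⟨y, by simp⟩
    | succ k ih =>
      intro hk
      have hkL : k < L := hk
      have h1 := ih (le_of_lt hkL)
      set i : Fin L := ⟨k, hkL⟩ with hi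
      obtain ⟨A, B, hAB⟩ := hbez i
      have herase : ((List.ofFn Γ).eraseIdx i.val).prod
          = ((List.ofFn Γ).take k).prod * ((List.ofFn Γ).drop (k + 1)).prod := by
        rw [List.eraseIdx_eq_take_drop_succ, List.prod_append]
      have hbez' : ((List.ofFn Γ).take k).prod * (((List.ofFn Γ).drop (k + 1)).prod * A)
          + Γ i * B = 1 := by
        rw [← mul_assoc, ← herase, hAB]
      have hcomm' : ((List.ofFn Γ).take k).prod * Γ i = Γ i * ((List.ofFn Γ).take k).prod := by
        have : Commute (Γ i) (((List.ofFn Γ).take k).prod) := by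
          apply Commute.list_prod_right
          intro x hx
          obtain ⟨j, rfl⟩ := List.mem_ofFn.mp (List.mem_of_mem_take hx)
          exact hcomm i j
        exact this.symm
      have hdet1 : (((List.ofFn Γ).take k).prod).det ≠ 0 :=
        det_prod_ne_zero (fun x hx => hmem x (List.mem_of_mem_take hx))
      have hstep := lat_inf_le hdet1 (hΓ i) hcomm' hbez'
        (AddSubgroup.mem_inf.mpr ⟨h1, hy i⟩)
      have htake : ((List.ofFn Γ).take (k + 1)).prod
          = ((List.ofFn Γ).take k).prod * Γ i := by
        rw [List.prod_take_succ _ _ (by omega)]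
        congr 1
        simp [List.get_ofFn, hi]
      rw [htake]
      exact hstep
  have h3 : List.take L (List.ofFn Γ) = List.ofFn Γ :=
    List.take_of_length_le (le_of_eq hlen)
  have := main L (le_refl L)
  rwa [h3] at this

end Stmt9Aux


/-- reconstruction formula (Corollary 2) with `M` unimodular:
`m = ⟨ Σᵢ Wᵢ Ŵᵢ rᵢ ⟩_R`. -/
theorem stmt9 {D L : ℕ} (hL : 1 ≤ L)
    (M : Matrix (Fin D) (Fin D) ℤ) (hM : Unimod M)
    (Γ : Fin L → Matrix (Fin D) (Fin D) ℤ) (hΓ : ∀ i, (Γ i).det ≠ 0)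
    (hcomm : ∀ i j, Γ i * Γ j = Γ j * Γ i)
    (hcop : ∀ i j, i ≠ j → MatCoprime (Γ i) (Γ j))
    (U : Matrix (Fin D) (Fin D) ℤ) (hU : Unimod U)
    (R : Matrix (Fin D) (Fin D) ℤ) (hR : R = M * (List.ofFn Γ).prod * U)
    (W Wh : Fin L → Matrix (Fin D) (Fin D) ℤ)
    (hW : ∀ i, W i = M * ((List.ofFn Γ).eraseIdx i.val).prod)
    (hWh : ∀ i, ∃ Q : Matrix (Fin D) (Fin D) ℤ, W i * Wh i + (M * Γ i) * Q = 1)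
    (m : Fin D → ℤ) (hm : m ∈ NSet R)
    (r : Fin L → Fin D → ℤ) (hr : ∀ i, IsRem (M * Γ i) m (r i)) :
    IsRem R (∑ i, (W i * Wh i).mulVec (r i)) m := by
  classical
  obtain ⟨N, hMN, hNM⟩ : ∃ N, M * N = 1 ∧ N * M = 1 := by
    refine ⟨M.det • M.adjugate, ?_, ?_⟩
    · rw [Matrix.mul_smul, Matrix.mul_adjugate, smul_smul]
      rcases hM with h | h <;> rw [h] <;> norm_num
    · rw [Matrix.smul_mul, Matrix.adjugate_mul, smul_smul]
      rcases hM with h | h <;> rw [h] <;> norm_num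
  obtain ⟨V, hUV, hVU⟩ : ∃ V, U * V = 1 ∧ V * U = 1 := by
    refine ⟨U.det • U.adjugate, ?_, ?_⟩
    · rw [Matrix.mul_smul, Matrix.mul_adjugate, smul_smul]
      rcases hU with h | h <;> rw [h] <;> norm_num
    · rw [Matrix.smul_mul, Matrix.adjugate_mul, smul_smul]
      rcases hU with h | h <;> rw [h] <;> norm_num
  refine ⟨hm, ?_⟩
  set s := ∑ i, (W i * Wh i).mulVec (r i) with hs
  have hstep : ∀ j : Fin L, s - m ∈ Stmt9Aux.lat (M * Γ j) := by
    intro j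
    have hsplit : s - m = ((W j * Wh j).mulVec (r j) - m)
        + ∑ i ∈ Finset.univ.erase j, (W i * Wh i).mulVec (r i) := by
      rw [hs, ← Finset.add_sum_erase _ _ (Finset.mem_univ j), add_sub_right_comm]
    rw [hsplit]
    refine AddSubgroup.add_mem _ ?_ (AddSubgroup.sum_mem _ ?_)
    · obtain ⟨Q, hQ⟩ := hWh j
      have hWWh : W j * Wh j = 1 - (M * Γ j) * Q := eq_sub_of_add_eq hQ
      have h1 : m - r j ∈ Stmt9Aux.lat (M * Γ j) := by
        obtain ⟨n, hn⟩ := (hr j).2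
        exact Stmt9Aux.mem_lat.mpr ⟨n, hn.symm⟩
      have h2 : ((M * Γ j) * Q).mulVec (r j) ∈ Stmt9Aux.lat (M * Γ j) :=
        Stmt9Aux.mem_lat.mpr ⟨Q.mulVec (r j), by rw [Matrix.mulVec_mulVec]⟩
      have heq : (W j * Wh j).mulVec (r j) - m
          = -(m - r j) - ((M * Γ j) * Q).mulVec (r j) := by
        rw [hWWh, Matrix.sub_mulVec, Matrix.one_mulVec]
        abel
      rw [heq]
      exact AddSubgroup.sub_mem _ (AddSubgroup.neg_mem _ h1) h2
    · intro i hi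
      have hij : j ≠ i := (Finset.ne_of_mem_erase hi).symm
      obtain ⟨C, hC⟩ := Stmt9Aux.prod_factor (Stmt9Aux.mem_eraseIdx_ofFn Γ hij)
        (fun y hy => by
          obtain ⟨k, rfl⟩ := List.mem_ofFn.mp (List.mem_of_mem_eraseIdx hy)
          exact hcomm j k)
      have hfact : W i * Wh i = (M * Γ j) * (C * Wh i) := by
        rw [hW i, hC]
        simp only [mul_assoc]
      rw [hfact]
      exact Stmt9Aux.mem_lat.mpr ⟨(C * Wh i).mulVec (r i), by rw [Matrix.mulVec_mulVec]⟩
  have hy : ∀ j, (N.mulVec (s - m)) ∈ Stmt9Aux.lat (Γ j) := by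
    intro j
    obtain ⟨z, hz⟩ := Stmt9Aux.mem_lat.mp (hstep j)
    refine Stmt9Aux.mem_lat.mpr ⟨z, ?_⟩
    rw [← hz, Matrix.mulVec_mulVec, ← mul_assoc, hNM, one_mul]
  have hbez : ∀ i : Fin L, ∃ A B : Matrix (Fin D) (Fin D) ℤ,
      ((List.ofFn Γ).eraseIdx i.val).prod * A + Γ i * B = 1 := by
    intro i
    obtain ⟨Q, hQ⟩ := hWh i
    refine ⟨Wh i * M, Q * M, ?_⟩
    have h1 : M * (((List.ofFn Γ).eraseIdx i.val).prod * Wh i + Γ i * Q) = 1 := by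
      rw [Matrix.mul_add, ← mul_assoc, ← mul_assoc, ← hW i, hQ]
    have h2 := mul_eq_one_comm.mp h1
    rw [← mul_assoc, ← mul_assoc, ← add_mul]
    exact h2
  have hyP := Stmt9Aux.key_induction Γ hΓ hcomm hbez _ hy
  obtain ⟨t, ht⟩ := Stmt9Aux.mem_lat.mp hyP
  have hxt : s - m = (M * (List.ofFn Γ).prod).mulVec t := by
    have hMx : M.mulVec (N.mulVec (s - m)) = s - m := by
      rw [Matrix.mulVec_mulVec, hMN, Matrix.one_mulVec]
    rw [← hMx, ← ht, Matrix.mulVec_mulVec]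
  refine ⟨V.mulVec t, ?_⟩
  rw [hR, Matrix.mulVec_mulVec, mul_assoc (M * (List.ofFn Γ).prod) U V, hUV, mul_one]
  exact hxt
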